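/- For every u ∈ (0,∞)^d and v ∈ (0,∞), one has ∫_{S_d} (1 − x_1 − … − x_d)^{v−1} ∏_{i=1}^d x_i^{u_i−1} dx = Γ(v) ∏_{i=1}^d Γ(u_i) / Γ(u_1 + … + u_d + v); equivalently, the Dirichlet(u,v) density K_{u,v} integrates to 1 over S_d. -/

import Mathlib

open MeasureTheory ProbabilityTheory Real Filter Finset Matrix

noncomputable section

/-- The unit simplex `S_d = {x ∈ [0,1]^d : x_1 + … + x_d ≤ 1}`. -/
def Sd (d : ℕ) : Set (Fin d → ℝ) :=
  {x | (∀ i, 0 ≤ x i ∧ x i ≤ 1) ∧ ∑ i, x i ≤ 1}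

/-- The interior of the unit simplex. -/
def SdInt (d : ℕ) : Set (Fin d → ℝ) :=
  {x | (∀ i, 0 < x i) ∧ ∑ i, x i < 1}

/-- The Dirichlet(u, v) density on the simplex. -/
def Kdir {d : ℕ} (u : Fin d → ℝ) (v : ℝ) (x : Fin d → ℝ) : ℝ :=
  (Gamma ((∑ i, u i) + v) / (Gamma v * ∏ i, Gamma (u i))) *
    (1 - ∑ i, x i) ^ (v - 1) * ∏ i, (x i) ^ (u i - 1)

/-- The locally adaptive Dirichlet kernel `κ_{s,b}`. -/
def kappa {d : ℕ} (s : Fin d → ℝ) (b : ℝ) : (Fin d → ℝ) → ℝ :=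
  Kdir (fun i => s i / b + 1) ((1 - ∑ i, s i) / b + 1)

/-- `A_b(s) = ∫_{S_d} κ_{s,b}(x)² dx`. -/
def Adir {d : ℕ} (b : ℝ) (s : Fin d → ℝ) : ℝ :=
  ∫ x in Sd d, (kappa s b x) ^ 2

/-- Second partial derivative `∂² m / ∂ s_k ∂ s_ℓ` at `s`. -/
def d2 {d : ℕ} (m : (Fin d → ℝ) → ℝ) (k l : Fin d) (s : Fin d → ℝ) : ℝ :=
  fderiv ℝ (fun x => fderiv ℝ m x (Pi.single l 1)) s (Pi.single k 1)

/-- The function `h_J(s)` from the paper. -/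
def hJfun {d : ℕ} (m : (Fin d → ℝ) → ℝ) (J : Finset (Fin d)) (lam : Fin d → ℝ)
    (s : Fin d → ℝ) : ℝ :=
  if J = Finset.univ then
    ∑ k, ∑ l, (1 / 2 : ℝ) * ((lam k + 1) * (if k = l then 1 else 0) + 1) * d2 m k l s
  else
    ∑ k ∈ Jᶜ, ∑ l ∈ Jᶜ, (1 / 2 : ℝ) * ((if k = l then s k else 0) - s k * s l) * d2 m k l s

/-- The function `ψ_J(s)` from the paper. -/
def psiJ {d : ℕ} (J : Finset (Fin d)) (s : Fin d → ℝ) : ℝ :=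
  ((4 * π) ^ ((d : ℝ) - J.card) * (1 - ∑ i, s i) * ∏ i ∈ Jᶜ, s i) ^ (-(1 : ℝ) / 2)

/-- The product `∏_{i ∈ J} Γ(2λ_i+1) / (2^{2λ_i+1} Γ(λ_i+1)²)`. -/
def gamProd {d : ℕ} (J : Finset (Fin d)) (lam : Fin d → ℝ) : ℝ :=
  ∏ i ∈ J, Gamma (2 * lam i + 1) / ((2 : ℝ) ^ (2 * lam i + 1) * Gamma (lam i + 1) ^ 2)

/-- The local linear smoother with Dirichlet kernel. -/
def mLL {d n : ℕ} (b : ℝ) (X : Fin n → Fin d → ℝ) (Y : Fin n → ℝ) (s : Fin d → ℝ) : ℝ :=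
  let 𝒳 : Matrix (Fin n) (Fin (d + 1)) ℝ :=
    Matrix.of fun i => Fin.cases 1 (fun k => X i k - s k)
  let W : Matrix (Fin n) (Fin n) ℝ := Matrix.diagonal fun i => kappa s b (X i)
  ((𝒳ᵀ * W * 𝒳)⁻¹ *ᵥ (𝒳ᵀ *ᵥ (W *ᵥ Y))) 0

/-- The Nadaraya–Watson estimator with Dirichlet kernel. -/
def mNW {d n : ℕ} (b : ℝ) (X : Fin n → Fin d → ℝ) (Y : Fin n → ℝ) (s : Fin d → ℝ) : ℝ :=
  (∑ i, Y i * kappa s b (X i)) / ∑ j, kappa s b (X j)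

/-- Central second moment `C_b(s; k, ℓ)` of the Dirichlet kernel. -/
def CbM {d : ℕ} (b : ℝ) (s : Fin d → ℝ) (k l : Fin d) : ℝ :=
  ∫ x in Sd d, (x k - s k) * (x l - s l) * kappa s b x

end
section DirichletAux
open MeasureTheory Real Set


lemma DirAux_realBeta {a b : ℝ} (ha : 0 < a) (hb : 0 < b) :
    ∫ x in (0:ℝ)..1, x ^ (a - 1) * (1 - x) ^ (b - 1) =
      Gamma a * Gamma b / Gamma (a + b) := by
  have DirAux_key : Complex.Gamma a * Complex.Gamma b =
      Complex.Gamma (a + b) * Complex.betaIntegral a b :=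
    Complex.Gamma_mul_Gamma_eq_betaIntegral (by simpa using ha) (by simpa using hb)
  have hbeta : Complex.betaIntegral a b =
      ((∫ x in (0:ℝ)..1, x ^ (a - 1) * (1 - x) ^ (b - 1) : ℝ) : ℂ) := by
    rw [Complex.betaIntegral, ← intervalIntegral.integral_ofReal]
    refine intervalIntegral.integral_congr fun x hx => ?_
    rw [Set.uIcc_of_le (by norm_num : (0:ℝ) ≤ 1)] at hx
    rw [Complex.ofReal_mul, Complex.ofReal_cpow hx.1 (a-1), Complex.ofReal_cpow (by linarith [hx.2] : (0:ℝ) ≤ 1 - x) (b-1)]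
    push_cast
    ring
  rw [hbeta] at DirAux_key
  have hG : Complex.Gamma (a + b) = ((Gamma (a + b) : ℝ) : ℂ) := by
    rw [← Complex.Gamma_ofReal]; push_cast; ring_nf
  rw [Complex.Gamma_ofReal, Complex.Gamma_ofReal, hG] at DirAux_key
  have : Gamma a * Gamma b = Gamma (a + b) * ∫ x in (0:ℝ)..1, x ^ (a - 1) * (1 - x) ^ (b - 1) := by
    exact_mod_cast DirAux_key
  have hpos := Gamma_pos_of_pos (by linarith : 0 < a + b)
  field_simp
  linarith [this]

lemma DirAux_DirAux_realBeta_integrable {a b : ℝ} (ha : 0 < a) (hb : 0 < b) :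
    IntegrableOn (fun x : ℝ => x ^ (a - 1) * (1 - x) ^ (b - 1)) (Ioc 0 1) := by
  have h := Complex.betaIntegral_convergent (u := a) (v := b) (by simpa using ha) (by simpa using hb)
  have h2 : IntegrableOn (fun x : ℝ => (x:ℂ) ^ ((a:ℂ) - 1) * (1 - (x:ℂ)) ^ ((b:ℂ) - 1))
      (Ioc 0 1) := by
    rw [← intervalIntegrable_iff_integrableOn_Ioc_of_le (by norm_num : (0:ℝ) ≤ 1)]
    exact h
  have h3 := h2.re
  refine h3.congr ?_
  refine (ae_restrict_iff' measurableSet_Ioc).2 (Filter.Eventually.of_forall fun x hx => ?_)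
  have hx0 : (0:ℝ) ≤ x := le_of_lt hx.1
  have hx1 : (0:ℝ) ≤ 1 - x := by linarith [hx.2]
  have : (x:ℂ) ^ ((a:ℂ) - 1) * (1 - (x:ℂ)) ^ ((b:ℂ) - 1) =
      ((x ^ (a - 1) * (1 - x) ^ (b - 1) : ℝ) : ℂ) := by
    rw [Complex.ofReal_mul, Complex.ofReal_cpow hx0 (a-1), Complex.ofReal_cpow hx1 (b-1)]
    push_cast; ring
  simp [this]

lemma DirAux_lintegral_beta {a b : ℝ} (ha : 0 < a) (hb : 0 < b) :
    ∫⁻ x in Ioo (0:ℝ) 1, ENNReal.ofReal (x ^ (a - 1) * (1 - x) ^ (b - 1)) =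
      ENNReal.ofReal (Gamma a * Gamma b / Gamma (a + b)) := by
  rw [← DirAux_realBeta ha hb, intervalIntegral.integral_of_le (by norm_num : (0:ℝ) ≤ 1)]
  rw [Measure.restrict_congr_set Ioo_ae_eq_Ioc]
  rw [ofReal_integral_eq_lintegral_ofReal (DirAux_DirAux_realBeta_integrable ha hb)]
  refine (ae_restrict_iff' measurableSet_Ioc).2 (Filter.Eventually.of_forall fun x hx => ?_)
  exact mul_nonneg (rpow_nonneg hx.1.le _) (rpow_nonneg (by linarith [hx.2]) _)


lemma DirAux_Sd_eq (d : ℕ) : Sd d = {x | (∀ i, 0 ≤ x i) ∧ ∑ i, x i ≤ 1} := by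
  ext x
  simp only [Sd, Set.mem_setOf_eq]
  refine ⟨fun h => ⟨fun i => (h.1 i).1, h.2⟩, fun h => ⟨fun i => ⟨h.1 i, ?_⟩, h.2⟩⟩
  calc x i ≤ ∑ j, x j := Finset.single_le_sum (fun j _ => h.1 j) (Finset.mem_univ i)
    _ ≤ 1 := h.2

lemma DirAux_measurableSet_Sd (d : ℕ) : MeasurableSet (Sd d) := by
  rw [DirAux_Sd_eq]
  have h1 : MeasurableSet {x : Fin d → ℝ | ∀ i, 0 ≤ x i} := by
    rw [Set.setOf_forall]
    exact MeasurableSet.iInter fun i => measurableSet_le measurable_const (measurable_pi_apply i)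
  have h2 : MeasurableSet {x : Fin d → ℝ | ∑ i, x i ≤ 1} :=
    measurableSet_le (Finset.measurable_sum _ fun i _ => measurable_pi_apply i) measurable_const
  rw [Set.setOf_and]
  exact h1.inter h2

lemma DirAux_meas_f (d : ℕ) (u : Fin d → ℝ) (v : ℝ) :
    Measurable fun x : Fin d → ℝ =>
      ENNReal.ofReal ((1 - ∑ i, x i) ^ (v - 1) * ∏ i, (x i) ^ (u i - 1)) := by
  apply ENNReal.measurable_ofReal.comp
  apply Measurable.mul
  · fun_prop
  · exact Finset.measurable_prod _ fun i _ => by fun_prop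

lemma DirAux_lintegral_smul_fin (d : ℕ) {c : ℝ} (hc : 0 < c) (G : (Fin d → ℝ) → ENNReal)
    (hG : Measurable G) :
    ∫⁻ y, G y = ENNReal.ofReal (c ^ d) * ∫⁻ z, G (c • z) := by
  have hmap := Measure.map_addHaar_smul (volume : Measure (Fin d → ℝ)) (ne_of_gt hc)
  have h1 : ∫⁻ z, G (c • z) = ∫⁻ y, G y ∂(Measure.map (fun z : Fin d → ℝ => c • z) volume) :=
    (lintegral_map hG (measurable_const_smul c)).symm
  rw [h1, hmap, lintegral_smul_measure, Module.finrank_pi, Fintype.card_fin,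
    abs_of_nonneg (by positivity), smul_eq_mul, ← mul_assoc, ← ENNReal.ofReal_mul (by positivity),
    mul_inv_cancel₀ (by positivity), ENNReal.ofReal_one, one_mul]

lemma DirAux_key (d : ℕ) : ∀ (u : Fin d → ℝ) (v : ℝ), (∀ i, 0 < u i) → 0 < v →
    ∫⁻ x in Sd d, ENNReal.ofReal ((1 - ∑ i, x i) ^ (v - 1) * ∏ i, (x i) ^ (u i - 1)) =
      ENNReal.ofReal (Gamma v * (∏ i, Gamma (u i)) / Gamma ((∑ i, u i) + v)) := by
  induction d with
  | zero =>
    intro u v hu hv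
    have hS : Sd 0 = Set.univ := by ext x; simp [Sd]
    rw [hS, Measure.restrict_univ]
    simp only [Finset.univ_eq_empty, Finset.sum_empty, Finset.prod_empty, sub_zero,
      Real.one_rpow, mul_one, zero_add]
    rw [lintegral_const]
    rw [show (volume : Measure (Fin 0 → ℝ)) Set.univ = 1 by
      rw [MeasureTheory.volume_pi, Measure.pi_univ]; simp]
    rw [mul_one, div_self (Gamma_pos_of_pos hv).ne']
  | succ d ih =>
    intro u v hu hv
    set u' : Fin d → ℝ := fun i => u i.succ with hu'def
    have hu' : ∀ i, 0 < u' i := fun i => hu i.succ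
    have hsum' : 0 ≤ ∑ i, u' i := Finset.sum_nonneg fun i _ => (hu' i).le
    have hw0 : 0 < (∑ i, u' i) + v := by linarith
    set C : ENNReal :=
      ENNReal.ofReal (Gamma v * (∏ i, Gamma (u' i)) / Gamma ((∑ i, u' i) + v)) with hCdef
    set F : (Fin (d+1) → ℝ) → ENNReal := fun x =>
      ENNReal.ofReal ((1 - ∑ i, x i) ^ (v - 1) * ∏ i, (x i) ^ (u i - 1)) with hFdef
    have hFm : Measurable F := DirAux_meas_f _ u v
    have hgm : Measurable ((Sd (d+1)).indicator F) := hFm.indicator (DirAux_measurableSet_Sd _)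
    set e := MeasurableEquiv.piFinSuccAbove (fun _ : Fin (d+1) => ℝ) 0 with hedef
    have he2 : ∀ (t : ℝ) (y : Fin d → ℝ), e.symm (t, y) = Fin.cons t y := by
      intro t y
      have h0 : e.symm (t, y) = Fin.insertNth 0 t y := rfl
      rw [h0]
      exact Fin.insertNth_zero' t y
    have hmp := (volume_preserving_piFinSuccAbove (fun _ : Fin (d+1) => ℝ) 0).symm e
    rw [← lintegral_indicator (DirAux_measurableSet_Sd (d+1)), ← hmp.lintegral_comp hgm,
      MeasureTheory.Measure.volume_eq_prod,
      lintegral_prod (fun p => (Sd (d+1)).indicator F (e.symm p))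
        (Measurable.aemeasurable (by exact hgm.comp e.symm.measurable))]
    have hinner : ∀ᵐ t : ℝ,
        (∫⁻ y, (Sd (d+1)).indicator F (e.symm (t, y))) =
          (Ioo (0:ℝ) 1).indicator
            (fun t => ENNReal.ofReal (t ^ (u 0 - 1) * (1-t) ^ ((∑ i, u' i) + v - 1)) * C) t := by
      have hnull : ∀ᵐ t : ℝ, t ∉ ({0, 1} : Set ℝ) := by
        refine measure_eq_zero_iff_ae_notMem.mp ?_
        exact ((Set.finite_singleton (1:ℝ)).insert 0).measure_zero volume
      filter_upwards [hnull] with t ht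
      by_cases htI : t ∈ Ioo (0:ℝ) 1
      · rw [Set.indicator_of_mem htI]
        have ht0 : 0 < t := htI.1
        have hc : 0 < 1 - t := by linarith [htI.2]
        set c : ℝ := 1 - t with hcdef
        set E : ℝ := v - 1 + ((∑ i, u' i) - (d:ℝ)) with hEdef
        have hmem : ∀ z : Fin d → ℝ, (Fin.cons t (c • z) ∈ Sd (d+1)) ↔ z ∈ Sd d := by
          intro z
          rw [DirAux_Sd_eq, DirAux_Sd_eq]
          simp only [Set.mem_setOf_eq, Fin.forall_fin_succ, Fin.cons_zero, Fin.cons_succ,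
            Fin.sum_cons, Pi.smul_apply, smul_eq_mul, ← Finset.mul_sum]
          constructor
          · rintro ⟨⟨h0, hpos⟩, hsum⟩
            refine ⟨fun i => by nlinarith [hpos i], ?_⟩
            nlinarith
          · rintro ⟨hpos, hsum⟩
            exact ⟨⟨ht0.le, fun i => mul_nonneg hc.le (hpos i)⟩, by nlinarith⟩
        have hval : ∀ z ∈ Sd d, F (Fin.cons t (c • z)) =
            ENNReal.ofReal ((t ^ (u 0 - 1) * c ^ E) *
              ((1 - ∑ i, z i) ^ (v - 1) * ∏ i, (z i) ^ (u' i - 1))) := by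
          intro z hz
          rw [DirAux_Sd_eq] at hz
          obtain ⟨hz1, hz2⟩ := hz
          have e1 : 1 - ∑ i, (Fin.cons t (c • z)) i = c * (1 - ∑ i, z i) := by
            rw [Fin.sum_cons]
            simp only [Pi.smul_apply, smul_eq_mul, ← Finset.mul_sum]
            ring
          have e2 : ∏ i, ((Fin.cons t (c • z)) i) ^ (u i - 1) =
              t ^ (u 0 - 1) * (c ^ ((∑ i, u' i) - (d:ℝ)) * ∏ i, (z i) ^ (u' i - 1)) := by
            rw [Fin.prod_univ_succ]
            simp only [Fin.cons_zero, Fin.cons_succ, Pi.smul_apply, smul_eq_mul]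
            congr 1
            calc ∏ i : Fin d, (c * z i) ^ (u i.succ - 1)
                = ∏ i : Fin d, (c ^ (u' i - 1) * (z i) ^ (u' i - 1)) :=
                  Finset.prod_congr rfl fun i _ => Real.mul_rpow hc.le (hz1 i)
              _ = (∏ i : Fin d, c ^ (u' i - 1)) * ∏ i : Fin d, (z i) ^ (u' i - 1) :=
                  Finset.prod_mul_distrib
              _ = c ^ (∑ i : Fin d, (u' i - 1)) * ∏ i : Fin d, (z i) ^ (u' i - 1) := by
                  rw [← Real.rpow_sum_of_pos hc]
              _ = c ^ ((∑ i, u' i) - (d:ℝ)) * ∏ i : Fin d, (z i) ^ (u' i - 1) := by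
                  rw [Finset.sum_sub_distrib]
                  simp
          rw [hFdef]
          simp only []
          rw [e1, e2, Real.mul_rpow hc.le (by linarith : (0:ℝ) ≤ 1 - ∑ i, z i)]
          congr 1
          rw [hEdef, Real.rpow_add hc]
          ring
        have hGz : ∀ z : Fin d → ℝ, (Sd (d+1)).indicator F (e.symm (t, c • z)) =
            ENNReal.ofReal (t ^ (u 0 - 1) * c ^ E) *
              (Sd d).indicator (fun z =>
                ENNReal.ofReal ((1 - ∑ i, z i) ^ (v - 1) * ∏ i, (z i) ^ (u' i - 1))) z := by
          intro z
          rw [he2]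
          by_cases hz : z ∈ Sd d
          · rw [Set.indicator_of_mem ((hmem z).mpr hz), Set.indicator_of_mem hz, hval z hz,
              ENNReal.ofReal_mul (by positivity)]
          · rw [Set.indicator_of_notMem (fun h => hz ((hmem z).mp h)),
              Set.indicator_of_notMem hz, mul_zero]
        rw [DirAux_lintegral_smul_fin d hc (fun y => (Sd (d+1)).indicator F (e.symm (t, y)))
          (by exact hgm.comp (e.symm.measurable.comp measurable_prodMk_left))]
        simp_rw [hGz]
        rw [lintegral_const_mul _ ((DirAux_meas_f d u' v).indicator (DirAux_measurableSet_Sd d)),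
          lintegral_indicator (DirAux_measurableSet_Sd d), ih u' v hu' hv, ← hCdef,
          ← mul_assoc, ← ENNReal.ofReal_mul (by positivity)]
        congr 2
        rw [← Real.rpow_natCast c d,
          show (c:ℝ) ^ (d:ℝ) * (t ^ (u 0 - 1) * c ^ E) = t ^ (u 0 - 1) * (c ^ (d:ℝ) * c ^ E)
            from by ring, ← Real.rpow_add hc]
        congr 1
        rw [hEdef]
        ring
      · rw [Set.indicator_of_notMem htI]
        have hz : ∀ y : Fin d → ℝ, (Sd (d+1)).indicator F (e.symm (t, y)) = 0 := by
          intro y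
          rw [he2]
          apply Set.indicator_of_notMem
          intro hmem
          obtain ⟨h01, -⟩ := hmem
          have h0 := (h01 0).1
          have h1 := (h01 0).2
          rw [Fin.cons_zero] at h0 h1
          simp only [Set.mem_Ioo, not_and, not_lt] at htI
          simp only [Set.mem_insert_iff, Set.mem_singleton_iff, not_or] at ht
          rcases lt_or_eq_of_le h0 with h | h
          · rcases lt_or_eq_of_le h1 with h' | h'
            · exact absurd (htI h) (not_le.mpr h')
            · exact ht.2 h'
          · exact ht.1 h.symm
        simp only [hz]
        exact lintegral_zero
    rw [lintegral_congr_ae hinner, lintegral_indicator measurableSet_Ioo,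
      lintegral_mul_const _ (by fun_prop), DirAux_lintegral_beta (hu 0) hw0, hCdef,
      ← ENNReal.ofReal_mul
        (div_pos (mul_pos (Gamma_pos_of_pos (hu 0)) (Gamma_pos_of_pos hw0))
          (Gamma_pos_of_pos (by linarith [hu 0]))).le]
    congr 1
    have hne1 : Gamma ((∑ i, u' i) + v) ≠ 0 := (Gamma_pos_of_pos hw0).ne'
    have hne2 : Gamma (u 0 + ((∑ i, u' i) + v)) ≠ 0 :=
      (Gamma_pos_of_pos (by linarith [hu 0])).ne'
    rw [Fin.prod_univ_succ, Fin.sum_univ_succ,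
      show u 0 + ∑ i : Fin d, u i.succ + v = u 0 + ((∑ i, u' i) + v) from by rw [hu'def]; ring]
    field_simp
    ring


end DirichletAux

/-- the Dirichlet integral formula, and the fact that the
Dirichlet density integrates to one over the simplex. -/
theorem dirichlet_integral (d : ℕ) (u : Fin d → ℝ) (v : ℝ)
    (hu : ∀ i, 0 < u i) (hv : 0 < v) :
    (∫ x in Sd d, (1 - ∑ i, x i) ^ (v - 1) * ∏ i, (x i) ^ (u i - 1)) =
      Gamma v * (∏ i, Gamma (u i)) / Gamma ((∑ i, u i) + v) ∧
    (∫ x in Sd d, Kdir u v x) = 1 := by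
  have hprod : 0 < ∏ i, Gamma (u i) := Finset.prod_pos fun i _ => Gamma_pos_of_pos (hu i)
  have hsum : 0 < (∑ i, u i) + v := by
    have : 0 ≤ ∑ i, u i := Finset.sum_nonneg fun i _ => (hu i).le
    linarith
  have hrhs : 0 ≤ Gamma v * (∏ i, Gamma (u i)) / Gamma ((∑ i, u i) + v) :=
    (div_pos (mul_pos (Gamma_pos_of_pos hv) hprod) (Gamma_pos_of_pos hsum)).le
  have h1 : (∫ x in Sd d, (1 - ∑ i, x i) ^ (v - 1) * ∏ i, (x i) ^ (u i - 1)) =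
      Gamma v * (∏ i, Gamma (u i)) / Gamma ((∑ i, u i) + v) := by
    have hm : AEStronglyMeasurable
        (fun x : Fin d → ℝ => (1 - ∑ i, x i) ^ (v - 1) * ∏ i, (x i) ^ (u i - 1))
        (volume.restrict (Sd d)) := by
      refine Measurable.aestronglyMeasurable ?_
      exact ((by fun_prop : Measurable fun x : Fin d → ℝ => (1 - ∑ i, x i) ^ (v - 1)).mul
        (Finset.measurable_prod _ fun i _ => by fun_prop))
    have hnn : 0 ≤ᵐ[volume.restrict (Sd d)]
        fun x : Fin d → ℝ => (1 - ∑ i, x i) ^ (v - 1) * ∏ i, (x i) ^ (u i - 1) := by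
      refine (ae_restrict_iff' (DirAux_measurableSet_Sd d)).2 (Filter.Eventually.of_forall
        fun x hx => ?_)
      rw [DirAux_Sd_eq] at hx
      exact mul_nonneg (rpow_nonneg (by linarith [hx.2]) _)
        (Finset.prod_nonneg fun i _ => rpow_nonneg (hx.1 i) _)
    rw [integral_eq_lintegral_of_nonneg_ae hnn hm, DirAux_key d u v hu hv,
      ENNReal.toReal_ofReal hrhs]
  refine ⟨h1, ?_⟩
  have h2 : ∀ x : Fin d → ℝ, Kdir u v x =
      (Gamma ((∑ i, u i) + v) / (Gamma v * ∏ i, Gamma (u i))) *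
        ((1 - ∑ i, x i) ^ (v - 1) * ∏ i, (x i) ^ (u i - 1)) := fun x => by
    simp only [Kdir]; ring
  simp_rw [h2]
  rw [MeasureTheory.integral_const_mul, h1]
  field_simp
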